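/- Let p be a complex polynomial of degree n, c ≠ 0, and suppose p has a zero of multiplicity m at the point x = a/c. Then the Möbius-transformed polynomial q(x) = (cx+d)^n p((ax+b)/(cx+d)) (with ad - bc ≠ 0) has degree n - m. -/

import Mathlib

open Polynomial

noncomputable def Qpoly (a b c d : ℂ) (N : ℕ) (s : Polynomial ℂ) : Polynomial ℂ :=
  ∑ k ∈ Finset.range (N + 1),
    Polynomial.C (s.coeff k) * (Polynomial.C a * X + Polynomial.C b) ^ k *
      (Polynomial.C c * X + Polynomial.C d) ^ (N - k)

lemma Qpoly_map (a b c d : ℂ) (hc : c ≠ 0) (N : ℕ) (s : Polynomial ℂ) (hs : s.natDegree ≤ N) :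
    algebraMap (Polynomial ℂ) (RatFunc ℂ) (Qpoly a b c d N s)
      = (algebraMap (Polynomial ℂ) (RatFunc ℂ) (Polynomial.C c * X + Polynomial.C d)) ^ N *
        Polynomial.aeval
          ((algebraMap (Polynomial ℂ) (RatFunc ℂ) (Polynomial.C a * X + Polynomial.C b)) /
           (algebraMap (Polynomial ℂ) (RatFunc ℂ) (Polynomial.C c * X + Polynomial.C d))) s := by
  set φ := algebraMap (Polynomial ℂ) (RatFunc ℂ) with hφ
  set A' := φ (Polynomial.C a * X + Polynomial.C b) with hA
  set D' := φ (Polynomial.C c * X + Polynomial.C d) with hD'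
  have hDne : (Polynomial.C c * X + Polynomial.C d : Polynomial ℂ) ≠ 0 := fun h => by
    have := congrArg (fun r => r.coeff 1) h
    simp at this
    exact hc this
  have hD : D' ≠ 0 := fun h =>
    hDne ((map_eq_zero_iff φ (RatFunc.algebraMap_injective ℂ)).mp h)
  rw [aeval_eq_sum_range' (lt_of_le_of_lt hs (Nat.lt_succ_self N)), Finset.mul_sum, Qpoly,
    map_sum]
  refine Finset.sum_congr rfl fun k hk => ?_
  have hkN : k ≤ N := Nat.lt_succ_iff.mp (Finset.mem_range.mp hk)
  rw [map_mul, map_mul, map_pow, map_pow, ← hA, ← hD', Algebra.smul_def, div_pow]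
  have hsplit : D' ^ N = D' ^ (N - k) * D' ^ k := by
    rw [← pow_add, Nat.sub_add_cancel hkN]
  have hφC : φ (Polynomial.C (s.coeff k)) = algebraMap ℂ (RatFunc ℂ) (s.coeff k) := by
    rw [IsScalarTower.algebraMap_apply ℂ (Polynomial ℂ) (RatFunc ℂ), hφ, Polynomial.algebraMap_eq]
  rw [hφC, hsplit]
  field_simp

lemma Qpoly_natDegree (a b c d : ℂ) (hc : c ≠ 0) (N : ℕ) (s : Polynomial ℂ)
    (hs : s.natDegree ≤ N) (hroot : s.eval (a / c) ≠ 0) :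
    (Qpoly a b c d N s).natDegree = N := by
  have hA1 : (Polynomial.C a * X + Polynomial.C b : Polynomial ℂ).natDegree ≤ 1 := by
    apply natDegree_add_le_of_degree_le
    · exact (natDegree_C_mul_le a X).trans (by simp)
    · simp
  have hD1 : (Polynomial.C c * X + Polynomial.C d : Polynomial ℂ).natDegree ≤ 1 := by
    apply natDegree_add_le_of_degree_le
    · exact (natDegree_C_mul_le c X).trans (by simp)
    · simp
  have hdegle : (Qpoly a b c d N s).natDegree ≤ N := by
    apply Polynomial.natDegree_sum_le_of_forall_le
    intro k hk
    have hkN : k ≤ N := Nat.lt_succ_iff.mp (Finset.mem_range.mp hk)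
    calc (Polynomial.C (s.coeff k) * (Polynomial.C a * X + Polynomial.C b) ^ k *
        (Polynomial.C c * X + Polynomial.C d) ^ (N - k)).natDegree
        ≤ (Polynomial.C (s.coeff k) * (Polynomial.C a * X + Polynomial.C b) ^ k).natDegree
          + ((Polynomial.C c * X + Polynomial.C d) ^ (N - k)).natDegree := natDegree_mul_le
      _ ≤ (((Polynomial.C (s.coeff k)).natDegree +
            ((Polynomial.C a * X + Polynomial.C b) ^ k).natDegree)) + (N - k) * 1 := by
          gcongr
          · exact natDegree_mul_le
          · exact natDegree_pow_le_of_le _ hD1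
      _ ≤ (0 + k * 1) + (N - k) * 1 := by
          gcongr
          · simp
          · exact natDegree_pow_le_of_le _ hA1
      _ ≤ N := by omega
  have hcoeff : (Qpoly a b c d N s).coeff N = c ^ N * s.eval (a / c) := by
    rw [Qpoly, finset_sum_coeff]
    rw [Polynomial.eval_eq_sum_range' (lt_of_le_of_lt hs (Nat.lt_succ_self N)), Finset.mul_sum]
    refine Finset.sum_congr rfl fun k hk => ?_
    have hkN : k ≤ N := Nat.lt_succ_iff.mp (Finset.mem_range.mp hk)
    have hAk : ((Polynomial.C a * X + Polynomial.C b) ^ k).coeff k = a ^ k := by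
      have := coeff_pow_of_natDegree_le (m := k) hA1
      simpa using this
    have hDk : ((Polynomial.C c * X + Polynomial.C d) ^ (N - k)).coeff (N - k) = c ^ (N - k) := by
      have := coeff_pow_of_natDegree_le (m := N - k) hD1
      simpa using this
    have h1 : (Polynomial.C (s.coeff k) * (Polynomial.C a * X + Polynomial.C b) ^ k).natDegree
        ≤ k := by
      refine natDegree_mul_le.trans ?_
      have := natDegree_pow_le_of_le k hA1
      simp only [natDegree_C, mul_one] at this ⊢
      omega
    have h2' : ((Polynomial.C c * X + Polynomial.C d) ^ (N - k)).natDegree ≤ N - k := by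
      have := natDegree_pow_le_of_le (N - k) hD1
      omega
    have h2 := coeff_mul_add_eq_of_natDegree_le (df := k) (dg := N - k) h1 h2'
    have hNk : k + (N - k) = N := by omega
    rw [hNk] at h2
    rw [h2, hDk]
    have h3 : (Polynomial.C (s.coeff k) * (Polynomial.C a * X + Polynomial.C b) ^ k).coeff k
        = s.coeff k * a ^ k := by
      rw [coeff_C_mul, hAk]
    have hpow : c ^ N = c ^ k * c ^ (N - k) := by rw [← pow_add, hNk]
    rw [h3, hpow, div_pow]
    field_simp
  have hne : (Qpoly a b c d N s).coeff N ≠ 0 := by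
    rw [hcoeff]; exact mul_ne_zero (pow_ne_zero _ hc) hroot
  exact le_antisymm hdegle (le_natDegree_of_ne_zero hne)


theorem stmt_3 (a b c d : ℂ) (hΔ : a * d - b * c ≠ 0) (hc : c ≠ 0)
    (p : Polynomial ℂ) (hp : p ≠ 0) (n : ℕ) (hn : n = p.natDegree)
    (m : ℕ) (hm : p.rootMultiplicity (a / c) = m)
    (q : Polynomial ℂ)
    (hq : q = ∑ k ∈ Finset.range (n + 1),
      Polynomial.C (p.coeff k) * (Polynomial.C a * X + Polynomial.C b) ^ k *
        (Polynomial.C c * X + Polynomial.C d) ^ (n - k)) :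
    q.natDegree = n - m := by
  set e := a / c with he
  set r := p /ₘ (X - Polynomial.C e) ^ m with hr
  have hfac : (X - Polynomial.C e) ^ m * r = p := by
    rw [hr, ← hm]; exact p.pow_mul_divByMonic_rootMultiplicity_eq e
  have hr0 : r.eval e ≠ 0 := by
    rw [hr, ← hm]; exact Polynomial.eval_divByMonic_pow_rootMultiplicity_ne_zero e hp
  have hrne : r ≠ 0 := by
    intro h; rw [h, mul_zero] at hfac; exact hp hfac.symm
  have hdeg : n = m + r.natDegree := by
    rw [hn, ← hfac, Polynomial.natDegree_mul (pow_ne_zero _ (X_sub_C_ne_zero e)) hrne,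
      Polynomial.natDegree_pow, Polynomial.natDegree_X_sub_C, mul_one]
  have hmn : m ≤ n := by omega
  have hrdeg : r.natDegree = n - m := by omega
  have hqQ : q = Qpoly a b c d n p := by rw [hq]; rfl
  set φ := algebraMap (Polynomial ℂ) (RatFunc ℂ) with hφ
  set A' := φ (Polynomial.C a * X + Polynomial.C b) with hA
  set D' := φ (Polynomial.C c * X + Polynomial.C d) with hD'
  have hDne : (Polynomial.C c * X + Polynomial.C d : Polynomial ℂ) ≠ 0 := fun h => by
    have := congrArg (fun r => r.coeff 1) h
    simp at this
    exact hc this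
  have hD : D' ≠ 0 := fun h =>
    hDne ((map_eq_zero_iff φ (RatFunc.algebraMap_injective ℂ)).mp h)
  set u := b - e * d with hu
  have hu0 : u ≠ 0 := by
    rw [hu, he]
    intro h
    apply hΔ
    field_simp at h
    rw [sub_eq_zero]
    linear_combination -h
  have hA_sub : (Polynomial.C a * X + Polynomial.C b) -
      Polynomial.C e * (Polynomial.C c * X + Polynomial.C d) = Polynomial.C u := by
    have hec : e * c = a := div_mul_cancel₀ a hc
    rw [hu, ← hec, map_mul, map_sub, map_mul]
    ring
  have hφCe : ∀ z : ℂ, φ (Polynomial.C z) = algebraMap ℂ (RatFunc ℂ) z := fun z => by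
    rw [IsScalarTower.algebraMap_apply ℂ (Polynomial ℂ) (RatFunc ℂ), hφ, Polynomial.algebraMap_eq]
  set t := A' / D' with ht
  have hlin : Polynomial.aeval t (X - Polynomial.C e) = φ (Polynomial.C u) / D' := by
    rw [map_sub, Polynomial.aeval_X, Polynomial.aeval_C, ← hA_sub, map_sub, map_mul, ← hA,
      ← hD', hφCe, ht]
    field_simp
  have key : φ q = φ (Polynomial.C u) ^ m * φ (Qpoly a b c d (n - m) r) := by
    rw [hqQ, Qpoly_map a b c d hc n p (le_of_eq hn.symm),
      Qpoly_map a b c d hc (n - m) r (le_of_eq hrdeg), ← hfac, map_mul, map_pow, hlin,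
      ← hA, ← hD', ← ht, div_pow]
    have hsplit : D' ^ n = D' ^ m * D' ^ (n - m) := by rw [← pow_add]; congr 1; omega
    rw [hsplit]
    field_simp
  have hq_eq : q = Polynomial.C u ^ m * Qpoly a b c d (n - m) r := by
    apply RatFunc.algebraMap_injective ℂ
    rw [map_mul, map_pow]
    exact key
  rw [hq_eq, ← map_pow, Polynomial.natDegree_C_mul (pow_ne_zero _ hu0),
    Qpoly_natDegree a b c d hc (n - m) r (le_of_eq hrdeg) (by rw [← he]; exact hr0)]
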